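/- Let M = M(x) be the free magma on one generator x, graded by degree (number of x's). Let Γ = M \ (xM ∪ {x}), a sub-magma of M, and let Ω = Γ \ (Γ·Γ) be the set of elements of Γ that are not products of two elements of Γ. Then Ω freely generates Γ as a magma, i.e. Γ is a free magma on the set Ω. -/

import Mathlib

noncomputable section

namespace Stmt8

/-- The single generator `x` of the free magma `M(x)`. -/
def x1 : FreeMagma Unit := FreeMagma.of ()

/-- `Γ = M \ (xM ∪ {x})`, the set of monomials that are neither `x` nor of the form `x·t`. -/
def Gam : Set (FreeMagma Unit) := {t | t ≠ x1 ∧ ∀ s, t ≠ x1 * s}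

lemma mul_mem_Gam {a b : FreeMagma Unit} (ha : a ∈ Gam) (_hb : b ∈ Gam) :
    a * b ∈ Gam := by
  constructor
  · intro h
    exact FreeMagma.noConfusion rfl (heq_of_eq (show FreeMagma.mul a b = FreeMagma.of () from h))
  · intro s h
    have h' : FreeMagma.mul a b = FreeMagma.mul x1 s := h
    injection h' with h1 h2
    exact ha.1 h1

/-- `Γ` is a sub-magma: it is closed under the multiplication of `M(x)`. -/
instance : Mul Gam := ⟨fun a b => ⟨a.1 * b.1, mul_mem_Gam a.2 b.2⟩⟩

/-- `Ω = Γ \ Γ·Γ`: the elements of `Γ` that are not products of two elements of `Γ`. -/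
def Om : Set (FreeMagma Unit) :=
  Gam \ {t | ∃ s ∈ Gam, ∃ u ∈ Gam, t = s * u}

/-- The inclusion `Ω → Γ`. -/
def incl : Om → Gam := fun w => ⟨w.1, w.2.1⟩

lemma xx_not_mem_Gam : x1 * x1 ∉ Gam := fun h => h.2 x1 rfl

lemma t0_mem_Om : (x1 * x1) * x1 ∈ Om := by
  constructor
  · constructor
    · intro h; exact FreeMagma.noConfusion rfl (heq_of_eq (show FreeMagma.mul (x1 * x1) x1 = FreeMagma.of () from h))
    · intro s h
      have h' : FreeMagma.mul (x1 * x1) x1 = FreeMagma.mul x1 s := h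
      injection h' with h1 _
      exact FreeMagma.noConfusion rfl (heq_of_eq (show FreeMagma.mul x1 x1 = FreeMagma.of () from h1))
  · rintro ⟨s, hs, u, hu, h⟩
    have h' : FreeMagma.mul (x1 * x1) x1 = FreeMagma.mul s u := h
    injection h' with h1 _
    exact xx_not_mem_Gam (h1 ▸ hs)

open scoped Classical in
/-- Inverse map, with junk values off `Γ`. -/
noncomputable def g : FreeMagma Unit → FreeMagma Om
  | .of _ => FreeMagma.of ⟨_, t0_mem_Om⟩
  | .mul a b =>
    if h : FreeMagma.mul a b ∈ Om then FreeMagma.of ⟨_, h⟩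
    else g a * g b

lemma lift_g : ∀ t : FreeMagma Unit, (ht : t ∈ Gam) →
    ((FreeMagma.lift incl) (g t) : FreeMagma Unit) = t := by
  intro t
  induction t with
  | ih1 u => intro ht; exact absurd rfl ht.1
  | ih2 a b iha ihb =>
    intro ht
    by_cases h : FreeMagma.mul a b ∈ Om
    · simp only [g, h, dif_pos]
      rfl
    · have hdecomp : a ∈ Gam ∧ b ∈ Gam := by
        have : FreeMagma.mul a b ∈ {t | ∃ s ∈ Gam, ∃ u ∈ Gam, t = s * u} := by
          by_contra hc
          exact h ⟨ht, hc⟩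
        obtain ⟨s, hs, u, hu, he⟩ := this
        have he' : FreeMagma.mul a b = FreeMagma.mul s u := he
        injection he' with h1 h2
        exact ⟨h1 ▸ hs, h2 ▸ hu⟩
      simp only [g, h, dif_neg, not_false_iff]
      rw [map_mul]
      show ((FreeMagma.lift incl) (g a) : FreeMagma Unit) *
        ((FreeMagma.lift incl) (g b) : FreeMagma Unit) = _
      rw [iha hdecomp.1, ihb hdecomp.2]

lemma g_lift : ∀ w : FreeMagma Om, g ((FreeMagma.lift incl) w : FreeMagma Unit) = w := by
  intro w
  induction w with
  | ih1 v =>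
    obtain ⟨t, ht⟩ := v
    have hval : ((FreeMagma.lift incl) (FreeMagma.of ⟨t, ht⟩) : FreeMagma Unit) = t := rfl
    rw [hval]
    match t, ht with
    | .of u, ht => exact absurd rfl ht.1.1
    | .mul a b, ht => simp only [g, ht, dif_pos]
  | ih2 w1 w2 ih1 ih2 =>
    rw [map_mul]
    set v1 := (FreeMagma.lift incl) w1
    set v2 := (FreeMagma.lift incl) w2
    have hval : ((v1 * v2 : Gam) : FreeMagma Unit) = FreeMagma.mul v1.1 v2.1 := rfl
    rw [hval]
    have hnot : FreeMagma.mul v1.1 v2.1 ∉ Om := by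
      intro h
      exact h.2 ⟨v1.1, v1.2, v2.1, v2.2, rfl⟩
    show g (FreeMagma.mul v1.1 v2.1) = w1 * w2
    simp only [g, hnot, dif_neg, not_false_iff]
    rw [ih1, ih2]

/-- `Ω` freely generates `Γ`: the canonical magma homomorphism from the
free magma on `Ω` to `Γ` is bijective. -/
theorem Gamma_free_on_Omega : Function.Bijective ⇑(FreeMagma.lift incl) := by
  constructor
  · intro w1 w2 h
    have := congrArg (fun v : Gam => g v.1) h
    simpa [g_lift] using this
  · rintro ⟨t, ht⟩
    exact ⟨g t, Subtype.ext (lift_g t ht)⟩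

end Stmt8
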